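/- Let a > 0 and h : ℝ → ℝ be the quadratic h(λ) = α₁λ - (α₂/2)λ² with α₁, α₂ > 0, and let δ ∈ (0, π/a). There is no ε₀ ∈ (0, π/a - δ) such that the function r ↦ h'''(r-δ)·sin(ar)/a + 2h''(r-δ)cos(ar) + a·h'(r-δ)(sin(ar) - 1/sin(ar)) + a²·h(r-δ)cos(ar)(2 + 1/sin²(ar)) vanishes identically on the interval [δ, δ+ε₀). -/

import Mathlib

open Real

lemma analyticAt_csin (z : ℂ) : AnalyticAt ℂ Complex.sin z := by
  have h : Complex.sin = fun z : ℂ =>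
      (Complex.exp (-z * Complex.I) - Complex.exp (z * Complex.I)) * Complex.I / 2 := by
    funext w; rfl
  rw [h]
  exact (((analyticAt_cexp.comp (analyticAt_id.neg.mul analyticAt_const)).sub
    (analyticAt_cexp.comp (analyticAt_id.mul analyticAt_const))).mul
    analyticAt_const).div analyticAt_const two_ne_zero

lemma analyticAt_ccos (z : ℂ) : AnalyticAt ℂ Complex.cos z := by
  have h : Complex.cos = fun z : ℂ =>
      (Complex.exp (z * Complex.I) + Complex.exp (-z * Complex.I)) / 2 := by
    funext w; rfl
  rw [h]
  exact ((analyticAt_cexp.comp (analyticAt_id.mul analyticAt_const)).add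
    (analyticAt_cexp.comp (analyticAt_id.neg.mul analyticAt_const))).div
    analyticAt_const two_ne_zero

lemma analyticAt_rsin (x : ℝ) : AnalyticAt ℝ Real.sin x := by
  have h : Real.sin = fun y : ℝ => Complex.reCLM (Complex.sin (Complex.ofRealCLM y)) := by
    funext y; simp [Complex.sin_ofReal_re]
  rw [h]
  exact (Complex.reCLM.analyticAt _).comp
    (((analyticAt_csin _).restrictScalars).comp (Complex.ofRealCLM.analyticAt x))

lemma analyticAt_rcos (x : ℝ) : AnalyticAt ℝ Real.cos x := by
  have h : Real.cos = fun y : ℝ => Complex.reCLM (Complex.cos (Complex.ofRealCLM y)) := by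
    funext y; simp [Complex.cos_ofReal_re]
  rw [h]
  exact (Complex.reCLM.analyticAt _).comp
    (((analyticAt_ccos _).restrictScalars).comp (Complex.ofRealCLM.analyticAt x))

set_option maxHeartbeats 1000000 in

theorem stmt_11 (a δ α₁ α₂ : ℝ) (ha : 0 < a) (hδ0 : 0 < δ) (hδ : δ < π / a)
    (hα₁ : 0 < α₁) (hα₂ : 0 < α₂)
    (h : ℝ → ℝ) (hh : ∀ l, h l = α₁ * l - α₂ / 2 * l ^ 2) :
    ¬ ∃ ε₀ ∈ Set.Ioo 0 (π / a - δ), ∀ r ∈ Set.Ico δ (δ + ε₀),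
      deriv (deriv (deriv h)) (r - δ) * Real.sin (a * r) / a
      + 2 * deriv (deriv h) (r - δ) * Real.cos (a * r)
      + a * deriv h (r - δ) * (Real.sin (a * r) - 1 / Real.sin (a * r))
      + a ^ 2 * h (r - δ) * Real.cos (a * r) * (2 + 1 / (Real.sin (a * r)) ^ 2) = 0 := by
  rintro ⟨ε₀, ⟨hε0, hεlt⟩, hF⟩
  have hhf : h = fun l => α₁ * l - α₂ / 2 * l ^ 2 := funext hh
  have hd1 : deriv h = fun l => α₁ - α₂ * l := by
    funext l
    rw [hhf]
    have h1 : HasDerivAt (fun l : ℝ => α₁ * l - α₂ / 2 * l ^ 2) (α₁ - α₂ * l) l := by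
      have := ((hasDerivAt_id l).const_mul α₁).sub ((hasDerivAt_pow 2 l).const_mul (α₂ / 2))
      exact this.congr_deriv (by push_cast; ring)
    exact h1.deriv
  have hd2 : deriv (deriv h) = fun _ => -α₂ := by
    rw [hd1]; funext l
    have h1 : HasDerivAt (fun l : ℝ => α₁ - α₂ * l) (-α₂) l := by
      exact ((hasDerivAt_const l α₁).sub ((hasDerivAt_id l).const_mul α₂)).congr_deriv (by ring)
    exact h1.deriv
  have hd3 : deriv (deriv (deriv h)) = fun _ : ℝ => (0:ℝ) := by
    rw [hd2]; funext l; simp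
  set G : ℝ → ℝ := fun r =>
    -2 * α₂ * Real.cos (a * r) * Real.sin (a * r) ^ 2
    + a * (α₁ - α₂ * (r - δ)) * (Real.sin (a * r) ^ 3 - Real.sin (a * r))
    + a ^ 2 * (α₁ * (r - δ) - α₂ / 2 * (r - δ) ^ 2) * Real.cos (a * r)
        * (2 * Real.sin (a * r) ^ 2 + 1) with hGdef
  have hG0 : ∀ r ∈ Set.Ioo δ (δ + ε₀), G r = 0 := by
    intro r hr
    have hr1 : δ < r := hr.1
    have hr2 : r < δ + ε₀ := hr.2
    have har0 : 0 < a * r := mul_pos ha (hδ0.trans hr1)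
    have harπ : a * r < π := by
      have : r < π / a := by linarith
      calc a * r < a * (π / a) := by exact mul_lt_mul_of_pos_left this ha
        _ = π := by field_simp
    have hs : 0 < Real.sin (a * r) := Real.sin_pos_of_pos_of_lt_pi har0 harπ
    have hsne : Real.sin (a * r) ≠ 0 := ne_of_gt hs
    have hE := hF r ⟨le_of_lt hr1, hr2⟩
    rw [hd3, hd2, hd1, hhf] at hE
    simp only [] at hE
    field_simp at hE
    have h2 : 2 * Real.sin (a * r) * G r = 0 := by
      simp only [hGdef]
      have h5 : a * (2 * Real.sin (a * r) * G r) = 0 := by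
        simp only [hGdef]; linear_combination Real.sin (a * r) * hE
      exact (mul_eq_zero.mp h5).resolve_left ha.ne'
    rcases mul_eq_zero.mp h2 with h3 | h3
    · exact absurd h3 (by positivity)
    · exact h3
  -- G is analytic on all of ℝ
  have hGa : AnalyticOnNhd ℝ G Set.univ := by
    intro x _
    have hsin : AnalyticAt ℝ (fun r : ℝ => Real.sin (a * r)) x :=
      (analyticAt_rsin (a * x)).comp (analyticAt_const.mul analyticAt_id)
    have hcos : AnalyticAt ℝ (fun r : ℝ => Real.cos (a * r)) x :=
      (analyticAt_rcos (a * x)).comp (analyticAt_const.mul analyticAt_id)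
    have hid : AnalyticAt ℝ (fun r : ℝ => r) x := analyticAt_id
    simp only [hGdef]
    exact (((analyticAt_const.mul hcos).mul (hsin.pow 2)).add
      ((analyticAt_const.mul (analyticAt_const.sub
          (analyticAt_const.mul (hid.sub analyticAt_const)))).mul
        ((hsin.pow 3).sub hsin))).add
      (((analyticAt_const.mul ((analyticAt_const.mul (hid.sub analyticAt_const)).sub
          (analyticAt_const.mul ((hid.sub analyticAt_const).pow 2)))).mul hcos).mul
        ((analyticAt_const.mul (hsin.pow 2)).add analyticAt_const))
  have hmem : δ + ε₀ / 2 ∈ Set.Ioo δ (δ + ε₀) := by constructor <;> linarith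
  have hev : G =ᶠ[nhds (δ + ε₀ / 2)] 0 :=
    Filter.eventually_of_mem (isOpen_Ioo.mem_nhds hmem) (fun x hx => hG0 x hx)
  have hzero : Set.EqOn G 0 Set.univ :=
    hGa.eqOn_zero_of_preconnected_of_eventuallyEq_zero isPreconnected_univ
      (Set.mem_univ _) hev
  -- whenever sin (a t) = 0, the quadratic vanishes at t - δ
  have hpzero : ∀ t : ℝ, Real.sin (a * t) = 0 →
      α₁ * (t - δ) - α₂ / 2 * (t - δ) ^ 2 = 0 := by
    intro t hst
    have hG := hzero (Set.mem_univ t)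
    simp only [hGdef, Pi.zero_apply] at hG
    rw [hst] at hG
    have hc2 : Real.cos (a * t) ^ 2 = 1 := by
      nlinarith [Real.sin_sq_add_cos_sq (a * t), hst]
    have h4 : a ^ 2 * (α₁ * (t - δ) - α₂ / 2 * (t - δ) ^ 2) * Real.cos (a * t) = 0 := by
      linear_combination hG
    rcases mul_eq_zero.mp h4 with h5 | h5
    · rcases mul_eq_zero.mp h5 with h6 | h6
      · exact absurd h6 (by positivity)
      · exact h6
    · nlinarith [hc2]
  have hπa : 0 < π / a := lt_trans hδ0 hδ
  have hane : a ≠ 0 := ne_of_gt ha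
  have hat1 : a * (π / a) = π := by field_simp
  have hat2 : a * (2 * (π / a)) = 2 * π := by field_simp
  have hat3 : a * (3 * (π / a)) = 3 * π := by field_simp
  have hp1 := hpzero (π / a) (by rw [hat1]; exact Real.sin_pi)
  have hp2 := hpzero (2 * (π / a)) (by rw [hat2]; exact Real.sin_two_pi)
  have hp3 := hpzero (3 * (π / a)) (by
    rw [hat3, show (3 : ℝ) * π = π + 2 * π by ring, Real.sin_add_two_pi]
    exact Real.sin_pi)
  have hroot : ∀ x : ℝ, α₁ * x - α₂ / 2 * x ^ 2 = 0 → x = 0 ∨ α₂ * x = 2 * α₁ := by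
    intro x hx
    have hfac : x * (2 * α₁ - α₂ * x) = 0 := by linear_combination 2 * hx
    rcases mul_eq_zero.mp hfac with h' | h'
    · exact Or.inl h'
    · exact Or.inr (by linarith)
  have hx12 : π / a - δ < 2 * (π / a) - δ := by linarith
  have hx13 : π / a - δ < 3 * (π / a) - δ := by linarith
  have hx23 : 2 * (π / a) - δ < 3 * (π / a) - δ := by linarith
  rcases hroot _ hp1 with h1 | h1 <;> rcases hroot _ hp2 with h2 | h2 <;>
    rcases hroot _ hp3 with h3 | h3 <;>
    nlinarith [mul_pos hα₂ (sub_pos.mpr hx12), mul_pos hα₂ (sub_pos.mpr hx13),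
      mul_pos hα₂ (sub_pos.mpr hx23)]
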